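/- If the Hermitian matrix 2γM + C is positive definite, then γ (regarded as a complex number) is an eigenvalue of A, and every eigenvalue λ of A satisfies Re λ ≤ γ; consequently γ equals the spectral abscissa sup{Re λ : λ ∈ σ(A)}. -/

import Mathlib

open Matrix
open scoped ComplexOrder

noncomputable section

/-- The value `x* P x` (which is real for Hermitian `P`), taken as its real part. -/
def qf {n : ℕ} (P : Matrix (Fin n) (Fin n) ℂ) (x : Fin n → ℂ) : ℝ :=
  (star x ⬝ᵥ P.mulVec x).re

/-- The (positive semidefinite) square root of a positive semidefinite matrix,
extended by `0` to all matrices. -/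
def msqrt {n : ℕ} (P : Matrix (Fin n) (Fin n) ℂ) : Matrix (Fin n) (Fin n) ℂ :=
  open scoped Classical in
  if h : P.PosSemidef then
    (h.1.eigenvectorUnitary : Matrix (Fin n) (Fin n) ℂ) *
      diagonal ((↑) ∘ (√·) ∘ h.1.eigenvalues) *
      (star h.1.eigenvectorUnitary : Matrix (Fin n) (Fin n) ℂ)
  else 0

/-- The quadratic matrix pencil `K(λ) = λ²M + λC + K`. -/
def Kpen {n : ℕ} (M C K : Matrix (Fin n) (Fin n) ℂ) (lam : ℂ) :
    Matrix (Fin n) (Fin n) ℂ :=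
  lam ^ 2 • M + lam • C + K

/-- The real part of the `+`-root of the scalar quadratic
`m(x) λ² + c(x) λ + k(x) = 0`. -/
def rfun {n : ℕ} (M C K : Matrix (Fin n) (Fin n) ℂ) (x : Fin n → ℂ) : ℝ :=
  open scoped Classical in
  if (qf C x) ^ 2 ≥ 4 * qf M x * qf K x then
    (-(qf C x) + Real.sqrt ((qf C x) ^ 2 - 4 * qf M x * qf K x)) / (2 * qf M x)
  else
    -(qf C x) / (2 * qf M x)

/-- The spectral-shift bound `γ = sup_{x ≠ 0} Re p₊(x)`. -/
def gam {n : ℕ} (M C K : Matrix (Fin n) (Fin n) ℂ) : ℝ :=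
  sSup {y : ℝ | ∃ x : Fin n → ℂ, x ≠ 0 ∧ rfun M C K x = y}

/-- The phase-space matrix `A = [[0, K½ M⁻½], [−M⁻½ K½, −M⁻½ C M⁻½]]`. -/
def phaseA {n : ℕ} (M C K : Matrix (Fin n) (Fin n) ℂ) :
    Matrix (Fin n ⊕ Fin n) (Fin n ⊕ Fin n) ℂ :=
  fromBlocks 0 (msqrt K * (msqrt M)⁻¹)
    (-((msqrt M)⁻¹ * msqrt K)) (-((msqrt M)⁻¹ * C * (msqrt M)⁻¹))

/-- The operator norm of a matrix with respect to the Euclidean norm. -/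
def opNorm {m : Type*} [Fintype m] [DecidableEq m] (A : Matrix m m ℂ) : ℝ :=
  ‖toEuclideanCLM (𝕜 := ℂ) A‖

/-- The block matrix `L(μ) = [[K½ K(μ)⁻½, 0], [μ M½ K(μ)⁻½, I]]`. -/
def Lmat {n : ℕ} (M C K : Matrix (Fin n) (Fin n) ℂ) (mu : ℝ) :
    Matrix (Fin n ⊕ Fin n) (Fin n ⊕ Fin n) ℂ :=
  fromBlocks (msqrt K * (msqrt (Kpen M C K (mu : ℂ)))⁻¹) 0
    ((mu : ℂ) • (msqrt M * (msqrt (Kpen M C K (mu : ℂ)))⁻¹)) 1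

section Aux

variable {n : ℕ}

lemma psd_dot_eq {P : Matrix (Fin n) (Fin n) ℂ} (hP : P.PosSemidef) (x : Fin n → ℂ) :
    star x ⬝ᵥ P *ᵥ x = (qf P x : ℂ) := by
  have h0 := hP.dotProduct_mulVec_nonneg x
  rw [Complex.le_def] at h0
  apply Complex.ext
  · simp [qf]
  · simp [← h0.2]

lemma qf_pos {P : Matrix (Fin n) (Fin n) ℂ} (hP : P.PosDef) {x : Fin n → ℂ} (hx : x ≠ 0) :
    0 < qf P x := by
  have h0 := hP.dotProduct_mulVec_pos hx
  rw [Complex.lt_def] at h0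
  simpa [qf] using h0.1

lemma qf_continuous (P : Matrix (Fin n) (Fin n) ℂ) : Continuous (qf P) := by
  have h : Continuous fun x : Fin n → ℂ => star x ⬝ᵥ P *ᵥ x := by
    simp only [dotProduct, mulVec, Pi.star_apply]
    refine continuous_finset_sum _ fun i _ => ?_
    exact (continuous_star.comp (continuous_apply i)).mul
      (continuous_finset_sum _ fun j _ => continuous_const.mul (continuous_apply j))
  exact Complex.continuous_re.comp h

lemma qf_smul (P : Matrix (Fin n) (Fin n) ℂ) (t : ℝ) (x : Fin n → ℂ) :
    qf P ((t : ℂ) • x) = t ^ 2 * qf P x := by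
  unfold qf
  rw [star_smul, mulVec_smul, smul_dotProduct, dotProduct_smul]
  simp only [smul_eq_mul, Complex.star_def, Complex.conj_ofReal]
  rw [← mul_assoc, ← Complex.ofReal_mul, Complex.re_ofReal_mul]
  ring

lemma rfun_eq (M C K : Matrix (Fin n) (Fin n) ℂ) (x : Fin n → ℂ) :
    rfun M C K x =
      (-(qf C x) + Real.sqrt ((qf C x) ^ 2 - 4 * qf M x * qf K x)) / (2 * qf M x) := by
  unfold rfun
  split_ifs with h
  · rfl
  · rw [Real.sqrt_eq_zero'.mpr (by push_neg at h; linarith), add_zero]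

lemma quadA (m c k mu : ℝ) (hm : 0 < m)
    (hmu : (-c + Real.sqrt (c ^ 2 - 4 * m * k)) / (2 * m) ≤ mu) :
    0 ≤ m * mu ^ 2 + c * mu + k := by
  rcases le_or_gt (c ^ 2 - 4 * m * k) 0 with hd | hd
  · nlinarith [sq_nonneg (2 * m * mu + c)]
  · have hs : Real.sqrt (c ^ 2 - 4 * m * k) ^ 2 = c ^ 2 - 4 * m * k :=
      Real.sq_sqrt hd.le
    have hs0 := Real.sqrt_nonneg (c ^ 2 - 4 * m * k)
    rw [div_le_iff₀ (by linarith)] at hmu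
    nlinarith [hmu, hs, hs0]

lemma quadB (m c k mu : ℝ) (hm : 0 < m) (h1 : 0 ≤ m * mu ^ 2 + c * mu + k)
    (h2 : 0 ≤ 2 * m * mu + c) :
    (-c + Real.sqrt (c ^ 2 - 4 * m * k)) / (2 * m) ≤ mu := by
  rw [div_le_iff₀ (by linarith)]
  have hle : Real.sqrt (c ^ 2 - 4 * m * k) ≤ 2 * m * mu + c := by
    calc Real.sqrt (c ^ 2 - 4 * m * k) ≤ Real.sqrt ((2 * m * mu + c) ^ 2) := by
          apply Real.sqrt_le_sqrt; nlinarith [mul_nonneg hm.le h1]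
      _ = 2 * m * mu + c := Real.sqrt_sq h2
  linarith

lemma quadC (m c k : ℝ) (hm : 0 < m) (lam : ℂ)
    (h : (m : ℂ) * lam ^ 2 + (c : ℂ) * lam + (k : ℂ) = 0) :
    lam.re ≤ (-c + Real.sqrt (c ^ 2 - 4 * m * k)) / (2 * m) := by
  set a := lam.re
  set b := lam.im
  have hre : m * (a * a - b * b) + c * a + k = 0 := by
    have := congrArg Complex.re h
    simpa [pow_two, Complex.add_re, Complex.mul_re, Complex.mul_im] using this
  have him : b * (2 * m * a + c) = 0 := by
    have := congrArg Complex.im h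
    simp [pow_two, Complex.add_im, Complex.mul_re, Complex.mul_im] at this
    nlinarith [this]
  rcases mul_eq_zero.mp him with hb | hac
  · have hk : m * a ^ 2 + c * a + k = 0 := by
      rw [hb] at hre; linear_combination hre
    have hd : c ^ 2 - 4 * m * k = (2 * m * a + c) ^ 2 := by linear_combination (-4 * m) * hk
    rw [hd, Real.sqrt_sq_eq_abs, le_div_iff₀ (by linarith)]
    have := le_abs_self (2 * m * a + c)
    linarith
  · have hd : c ^ 2 - 4 * m * k = -(2 * m * b) ^ 2 := by
      linear_combination (-4 * m) * hre + (2 * m * a + c) * hac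
    rw [Real.sqrt_eq_zero'.mpr (by nlinarith [sq_nonneg (2 * m * b)]), add_zero,
      le_div_iff₀ (by linarith)]
    linarith [hac]

lemma quad_nonpos (m c k : ℝ) (hm : 0 < m) (hc : 0 < c) (hk : 0 < k) :
    (-c + Real.sqrt (c ^ 2 - 4 * m * k)) / (2 * m) ≤ 0 := by
  apply div_nonpos_of_nonpos_of_nonneg _ (by linarith)
  have : Real.sqrt (c ^ 2 - 4 * m * k) ≤ c := by
    calc Real.sqrt (c ^ 2 - 4 * m * k) ≤ Real.sqrt (c ^ 2) := by
          apply Real.sqrt_le_sqrt; nlinarith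
      _ = c := by rw [Real.sqrt_sq hc.le]
  linarith

lemma rfun_smul (M C K : Matrix (Fin n) (Fin n) ℂ) (x : Fin n → ℂ)
    (hm : qf M x ≠ 0) (t : ℝ) (ht : 0 < t) :
    rfun M C K ((t : ℂ) • x) = rfun M C K x := by
  rw [rfun_eq, rfun_eq, qf_smul, qf_smul, qf_smul]
  have h4 : Real.sqrt ((t ^ 2 * qf C x) ^ 2 - 4 * (t ^ 2 * qf M x) * (t ^ 2 * qf K x))
      = t ^ 2 * Real.sqrt ((qf C x) ^ 2 - 4 * qf M x * qf K x) := by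
    rw [show (t ^ 2 * qf C x) ^ 2 - 4 * (t ^ 2 * qf M x) * (t ^ 2 * qf K x)
        = (t ^ 2) ^ 2 * ((qf C x) ^ 2 - 4 * qf M x * qf K x) by ring,
      Real.sqrt_mul (by positivity), Real.sqrt_sq (by positivity)]
  rw [h4, div_eq_div_iff (by positivity) (by positivity)]
  ring

lemma msqrt_mul_self {P : Matrix (Fin n) (Fin n) ℂ} (hP : P.PosSemidef) :
    msqrt P * msqrt P = P := by
  unfold msqrt
  rw [dif_pos hP]
  have hUU : (star hP.1.eigenvectorUnitary : Matrix (Fin n) (Fin n) ℂ) *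
      (hP.1.eigenvectorUnitary : Matrix (Fin n) (Fin n) ℂ) = 1 :=
    Unitary.coe_star_mul_self _
  have hD : diagonal (((↑) ∘ (√·) ∘ hP.1.eigenvalues : Fin n → ℂ)) *
      diagonal ((↑) ∘ (√·) ∘ hP.1.eigenvalues) = diagonal (RCLike.ofReal ∘ hP.1.eigenvalues) := by
    rw [diagonal_mul_diagonal]
    congr 1
    funext i
    simp only [Function.comp_apply]
    rw [← Complex.ofReal_mul, Real.mul_self_sqrt (hP.eigenvalues_nonneg i)]
    rfl
  conv_rhs => rw [hP.1.spectral_theorem, Unitary.conjStarAlgAut_apply]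
  simp only [Matrix.mul_assoc]
  rw [← Matrix.mul_assoc (star _) (_ : Matrix (Fin n) (Fin n) ℂ), hUU, Matrix.one_mul,
    ← Matrix.mul_assoc (diagonal _) (diagonal _), hD]

lemma msqrt_det_isUnit {P : Matrix (Fin n) (Fin n) ℂ} (hP : P.PosDef) :
    IsUnit (msqrt P).det := by
  have h1 : (msqrt P).det * (msqrt P).det = P.det := by
    rw [← det_mul, msqrt_mul_self hP.posSemidef]
  apply isUnit_iff_ne_zero.mpr
  intro h0
  rw [h0, mul_zero] at h1
  exact hP.det_pos.ne' h1.symm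

lemma det_shift {M C K : Matrix (Fin n) (Fin n) ℂ} (hM : M.PosDef) (hK : K.PosDef)
    (lam : ℂ) :
    ((lam • 1 : Matrix (Fin n ⊕ Fin n) (Fin n ⊕ Fin n) ℂ) - phaseA M C K).det
      = ((msqrt M)⁻¹.det) ^ 2 * (Kpen M C K lam).det := by
  set S := msqrt M with hSdef
  set T := msqrt K with hTdef
  have hS : IsUnit S.det := msqrt_det_isUnit hM
  have hT : IsUnit T.det := msqrt_det_isUnit hK
  have hSS : S * S = M := msqrt_mul_self hM.posSemidef
  have hTT : T * T = K := msqrt_mul_self hK.posSemidef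
  have hS1 : S⁻¹ * S = 1 := nonsing_inv_mul S hS
  have hS2 : S * S⁻¹ = 1 := mul_nonsing_inv S hS
  have hT1 : T⁻¹ * T = 1 := nonsing_inv_mul T hT
  have hT2 : T * T⁻¹ = 1 := mul_nonsing_inv T hT
  have hS1' : ∀ X : Matrix (Fin n) (Fin n) ℂ, S⁻¹ * (S * X) = X := fun X => by
    rw [← Matrix.mul_assoc, hS1, Matrix.one_mul]
  have hS2' : ∀ X : Matrix (Fin n) (Fin n) ℂ, S * (S⁻¹ * X) = X := fun X => by
    rw [← Matrix.mul_assoc, hS2, Matrix.one_mul]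
  have hT2' : ∀ X : Matrix (Fin n) (Fin n) ℂ, T * (T⁻¹ * X) = X := fun X => by
    rw [← Matrix.mul_assoc, hT2, Matrix.one_mul]
  have hL : (lam • 1 : Matrix (Fin n ⊕ Fin n) (Fin n ⊕ Fin n) ℂ) - phaseA M C K =
      fromBlocks (lam • 1) (-(T * S⁻¹)) (S⁻¹ * T) (lam • 1 + S⁻¹ * C * S⁻¹) := by
    rw [phaseA, ← fromBlocks_one, fromBlocks_smul, sub_eq_add_neg, fromBlocks_neg,
      fromBlocks_add]
    congr 1 <;> simp <;> rfl
  set U : Matrix (Fin n ⊕ Fin n) (Fin n ⊕ Fin n) ℂ :=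
    fromBlocks 1 0 (lam • (S * T⁻¹)) 1 with hUdef
  set Q : Matrix (Fin n ⊕ Fin n) (Fin n ⊕ Fin n) ℂ :=
    fromBlocks 0 1 (-1) 0 with hQdef
  have hQfac : Q = fromBlocks (1 : Matrix (Fin n) (Fin n) ℂ) 1 0 1 *
      fromBlocks 1 0 (-1) 1 * fromBlocks 1 1 0 1 := by
    rw [fromBlocks_multiply, fromBlocks_multiply, hQdef]
    norm_num
  have hQdet : Q.det = 1 := by
    rw [hQfac, det_mul, det_mul, det_fromBlocks_zero₂₁, det_fromBlocks_zero₁₂]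
    simp
  have hUdet : U.det = 1 := by
    rw [hUdef, det_fromBlocks_zero₁₂]
    simp
  have key : ((lam • 1 : Matrix (Fin n ⊕ Fin n) (Fin n ⊕ Fin n) ℂ) - phaseA M C K) * U * Q =
      fromBlocks (T * S⁻¹) 0 (-(lam • 1 + S⁻¹ * C * S⁻¹))
        (S⁻¹ * Kpen M C K lam * T⁻¹) := by
    rw [hL, hUdef, hQdef, fromBlocks_multiply, fromBlocks_multiply, Kpen, ← hSS, ← hTT,
      fromBlocks_inj]
    refine ⟨?_, ?_, ?_, ?_⟩
    · simp [Matrix.mul_smul, Matrix.smul_mul, Matrix.mul_assoc, hS1', hT2, hT2']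
    · simp [Matrix.mul_smul, Matrix.smul_mul, Matrix.mul_assoc, hS1', hT2, hT2']
    · simp [Matrix.mul_smul, Matrix.smul_mul, Matrix.mul_assoc, hS1', hT2, hT2']
    · simp only [Matrix.add_mul, Matrix.mul_add, Matrix.smul_mul, Matrix.mul_smul,
        Matrix.mul_assoc, Matrix.one_mul, Matrix.mul_one, Matrix.mul_zero, Matrix.zero_mul,
        add_zero, zero_add, smul_add, hS1', hS2', hT2, hT2', smul_smul, pow_two]
      abel
  have hdet := congrArg Matrix.det key
  rw [det_mul, det_mul, hUdet, hQdet, mul_one, mul_one] at hdet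
  rw [hdet, det_fromBlocks_zero₁₂, det_mul, det_mul, det_mul]
  have hTinv : T⁻¹.det = (T.det)⁻¹ := by
    rw [det_nonsing_inv, Ring.inverse_eq_inv]
  have hTne : T.det ≠ 0 := hT.ne_zero
  rw [hTinv]
  linear_combination (S⁻¹.det ^ 2 * (Kpen M C K lam).det) * (mul_inv_cancel₀ hTne)

lemma mem_spectrum_iff_det {M C K : Matrix (Fin n) (Fin n) ℂ} (hM : M.PosDef)
    (hK : K.PosDef) (lam : ℂ) :
    lam ∈ spectrum ℂ (phaseA M C K) ↔ (Kpen M C K lam).det = 0 := by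
  have hS : IsUnit (msqrt M).det := msqrt_det_isUnit hM
  have hSinv : ((msqrt M)⁻¹).det ≠ 0 := by
    rw [det_nonsing_inv, Ring.inverse_eq_inv]
    exact inv_ne_zero hS.ne_zero
  rw [spectrum.mem_iff, Matrix.isUnit_iff_isUnit_det, Algebra.algebraMap_eq_smul_one,
    det_shift hM hK lam, isUnit_iff_ne_zero]
  constructor
  · intro h
    by_contra h0
    exact h (mul_ne_zero (pow_ne_zero 2 hSinv) h0)
  · intro h0 h
    exact h (by rw [h0, mul_zero])

lemma dot_Kpen {M C K : Matrix (Fin n) (Fin n) ℂ} (hM : M.PosDef) (hC : C.PosDef)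
    (hK : K.PosDef) (lam : ℂ) (x : Fin n → ℂ) :
    star x ⬝ᵥ (Kpen M C K lam) *ᵥ x
      = lam ^ 2 * (qf M x : ℂ) + lam * (qf C x : ℂ) + (qf K x : ℂ) := by
  rw [Kpen, add_mulVec, add_mulVec, smul_mulVec, smul_mulVec,
    dotProduct_add, dotProduct_add, dotProduct_smul, dotProduct_smul,
    psd_dot_eq hM.posSemidef, psd_dot_eq hC.posSemidef, psd_dot_eq hK.posSemidef]
  simp [smul_eq_mul]

lemma qf_Kpen_real {M C K : Matrix (Fin n) (Fin n) ℂ} (hM : M.PosDef) (hC : C.PosDef)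
    (hK : K.PosDef) (g : ℝ) (x : Fin n → ℂ) :
    qf (Kpen M C K (g : ℂ)) x = qf M x * g ^ 2 + qf C x * g + qf K x := by
  have h1 : star x ⬝ᵥ (Kpen M C K (g : ℂ)) *ᵥ x
      = ((qf M x * g ^ 2 + qf C x * g + qf K x : ℝ) : ℂ) := by
    rw [dot_Kpen hM hC hK]; push_cast; ring
  calc qf (Kpen M C K (g : ℂ)) x = (star x ⬝ᵥ (Kpen M C K (g : ℂ)) *ᵥ x).re := rfl
    _ = qf M x * g ^ 2 + qf C x * g + qf K x := by rw [h1, Complex.ofReal_re]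

lemma qf_shift {M C : Matrix (Fin n) (Fin n) ℂ} (hM : M.PosDef) (hC : C.PosDef)
    (g : ℝ) (x : Fin n → ℂ) :
    qf ((((2 * g : ℝ)) : ℂ) • M + C) x = 2 * g * qf M x + qf C x := by
  have h1 : star x ⬝ᵥ ((((2 * g : ℝ)) : ℂ) • M + C) *ᵥ x
      = ((2 * g * qf M x + qf C x : ℝ) : ℂ) := by
    rw [add_mulVec, smul_mulVec, dotProduct_add, dotProduct_smul,
      psd_dot_eq hM.posSemidef, psd_dot_eq hC.posSemidef]
    simp only [smul_eq_mul]
    push_cast; ring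
  calc qf ((((2 * g : ℝ)) : ℂ) • M + C) x = (star x ⬝ᵥ ((((2 * g : ℝ)) : ℂ) • M + C) *ᵥ x).re := rfl
    _ = 2 * g * qf M x + qf C x := by rw [h1, Complex.ofReal_re]

end Aux

/-- If `2γM + C` is positive definite, then `γ` is an eigenvalue of `A`, every
eigenvalue of `A` has real part at most `γ`, and `γ` is the spectral abscissa. -/
theorem gamma_spectral_abscissa {n : ℕ} (hn : 1 ≤ n)
    (M C K : Matrix (Fin n) (Fin n) ℂ)
    (hM : M.PosDef) (hC : C.PosDef) (hK : K.PosDef)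
    (h : (((2 * gam M C K : ℝ) : ℂ) • M + C).PosDef) :
    ((gam M C K : ℝ) : ℂ) ∈ spectrum ℂ (phaseA M C K) ∧
      (∀ lam ∈ spectrum ℂ (phaseA M C K), lam.re ≤ gam M C K) ∧
      gam M C K = sSup {r : ℝ | ∃ lam ∈ spectrum ℂ (phaseA M C K), lam.re = r} := by
  haveI : Nonempty (Fin n) := ⟨⟨0, hn⟩⟩
  set γ := gam M C K with hγdef
  set Sset := {y : ℝ | ∃ x : Fin n → ℂ, x ≠ 0 ∧ rfun M C K x = y} with hSsetdef
  have hone : (fun _ : Fin n => (1 : ℂ)) ≠ 0 := by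
    intro h0
    have := congrFun h0 ⟨0, hn⟩
    simp at this
  have hSne : Sset.Nonempty := ⟨rfun M C K (fun _ => 1), fun _ => 1, hone, rfl⟩
  have hbdd : BddAbove Sset := by
    refine ⟨0, ?_⟩
    rintro y ⟨x, hx, rfl⟩
    rw [rfun_eq]
    exact quad_nonpos _ _ _ (qf_pos hM hx) (qf_pos hC hx) (qf_pos hK hx)
  have hmem : ∀ x : Fin n → ℂ, x ≠ 0 → rfun M C K x ≤ γ := fun x hx =>
    le_csSup hbdd ⟨x, hx, rfl⟩
  have hmem' : ∀ x : Fin n → ℂ, x ≠ 0 →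
      (-(qf C x) + Real.sqrt ((qf C x) ^ 2 - 4 * qf M x * qf K x)) / (2 * qf M x) ≤ γ := by
    intro x hx
    rw [← rfun_eq]
    exact hmem x hx
  -- positive semidefiniteness of the pencil at γ
  have hqfγ : ∀ x : Fin n → ℂ, x ≠ 0 → 0 ≤ qf (Kpen M C K (γ : ℂ)) x := by
    intro x hx
    rw [qf_Kpen_real hM hC hK]
    have := quadA (qf M x) (qf C x) (qf K x) γ (qf_pos hM hx) (hmem' x hx)
    linarith
  have hKpenPSD : (Kpen M C K ((γ : ℝ) : ℂ)).PosSemidef := by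
    refine Matrix.PosSemidef.of_dotProduct_mulVec_nonneg ?_ ?_
    · unfold Kpen
      have h1 : ((γ : ℂ) ^ 2 • M)ᴴ = (γ : ℂ) ^ 2 • M := by
        rw [conjTranspose_smul, hM.1.eq]
        congr 1
        simp [← Complex.ofReal_pow, Complex.conj_ofReal]
      have h2 : ((γ : ℂ) • C)ᴴ = (γ : ℂ) • C := by
        rw [conjTranspose_smul, hC.1.eq]
        congr 1
        simp [Complex.conj_ofReal]
      unfold IsHermitian
      rw [conjTranspose_add, conjTranspose_add, h1, h2, hK.1.eq]
    · intro x
      rcases eq_or_ne x 0 with rfl | hx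
      · simp
      · rw [dot_Kpen hM hC hK]
        have hcast : ((γ : ℂ)) ^ 2 * (qf M x : ℂ) + (γ : ℂ) * (qf C x : ℂ) + (qf K x : ℂ)
            = ((qf (Kpen M C K (γ : ℂ)) x : ℝ) : ℂ) := by
          rw [qf_Kpen_real hM hC hK]; push_cast; ring
        rw [hcast]
        exact Complex.zero_le_real.mpr (hqfγ x hx)
  -- the pencil is singular at γ
  have hsph0 : ∀ x ∈ Metric.sphere (0 : Fin n → ℂ) 1, x ≠ 0 := by
    intro x hx h0
    rw [mem_sphere_zero_iff_norm, h0] at hx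
    simp at hx
  have hdetγ : (Kpen M C K ((γ : ℝ) : ℂ)).det = 0 := by
    by_contra hdet
    have hcomp : IsCompact (Metric.sphere (0 : Fin n → ℂ) 1) := isCompact_sphere 0 1
    have hsphne : (Metric.sphere (0 : Fin n → ℂ) 1).Nonempty :=
      NormedSpace.sphere_nonempty.mpr zero_le_one
    obtain ⟨x₁, hx₁, hmin₁⟩ := hcomp.exists_isMinOn hsphne
      (qf_continuous (Kpen M C K ((γ : ℝ) : ℂ))).continuousOn
    obtain ⟨x₂, hx₂, hmin₂⟩ := hcomp.exists_isMinOn hsphne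
      (qf_continuous ((((2 * γ : ℝ)) : ℂ) • M + C)).continuousOn
    obtain ⟨x₃, hx₃, hmax₃⟩ := hcomp.exists_isMaxOn hsphne
      (qf_continuous ((((2 * γ : ℝ)) : ℂ) • M + C)).continuousOn
    obtain ⟨x₄, hx₄, hmax₄⟩ := hcomp.exists_isMaxOn hsphne
      (qf_continuous M).continuousOn
    set ε := qf (Kpen M C K ((γ : ℝ) : ℂ)) x₁ with hεdef
    set δ := qf ((((2 * γ : ℝ)) : ℂ) • M + C) x₂ with hδdef
    set D := qf ((((2 * γ : ℝ)) : ℂ) • M + C) x₃ with hDdef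
    set B := qf M x₄ with hBdef
    have hε : 0 < ε := by
      rcases (hqfγ x₁ (hsph0 x₁ hx₁)).lt_or_eq with hlt | heq
      · exact hlt
      · exfalso
        have h0 : star x₁ ⬝ᵥ (Kpen M C K ((γ : ℝ) : ℂ)) *ᵥ x₁ = 0 := by
          rw [psd_dot_eq hKpenPSD, ← heq]
          simp
        have h1 := (hKpenPSD.dotProduct_mulVec_zero_iff x₁).mp h0
        exact hdet (Matrix.exists_mulVec_eq_zero_iff.mp ⟨x₁, hsph0 x₁ hx₁, h1⟩)
    have hδ : 0 < δ := qf_pos h (hsph0 x₂ hx₂)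
    have hD : 0 < D := lt_of_lt_of_le hδ (isMaxOn_iff.mp hmax₃ x₂ hx₂)
    have hB : 0 < B := lt_of_lt_of_le (qf_pos hM (hsph0 x₂ hx₂)) (isMaxOn_iff.mp hmax₄ x₂ hx₂)
    set s := min (ε / (D + 1)) (δ / (2 * B + 1)) with hsdef
    have hs0 : 0 < s := lt_min (by positivity) (by positivity)
    have hub : ∀ x : Fin n → ℂ, x ≠ 0 → rfun M C K x ≤ γ - s := by
      have hsphub : ∀ x ∈ Metric.sphere (0 : Fin n → ℂ) 1, rfun M C K x ≤ γ - s := by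
        intro x hx
        have hxne := hsph0 x hx
        have hm := qf_pos hM hxne
        have e1 : ε ≤ qf (Kpen M C K ((γ : ℝ) : ℂ)) x := isMinOn_iff.mp hmin₁ x hx
        have e2 : qf ((((2 * γ : ℝ)) : ℂ) • M + C) x ≤ D := isMaxOn_iff.mp hmax₃ x hx
        have e3 : δ ≤ qf ((((2 * γ : ℝ)) : ℂ) • M + C) x := isMinOn_iff.mp hmin₂ x hx
        have e4 : qf M x ≤ B := isMaxOn_iff.mp hmax₄ x hx
        rw [qf_Kpen_real hM hC hK] at e1
        rw [qf_shift hM hC] at e2 e3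
        have h6 : s * (D + 1) ≤ ε := by
          rw [← le_div_iff₀ (by positivity)]
          exact min_le_left _ _
        have h7 : s * (2 * B + 1) ≤ δ := by
          rw [← le_div_iff₀ (by positivity)]
          exact min_le_right _ _
        rw [rfun_eq]
        apply quadB _ _ _ _ hm
        · nlinarith [e1, h6, hs0.le, mul_le_mul_of_nonneg_left e2 hs0.le,
            mul_nonneg (mul_nonneg hs0.le hs0.le) hm.le]
        · nlinarith [e3, h7, hs0.le, mul_le_mul_of_nonneg_left e4 hs0.le]
      intro x hx
      have hnx : (0 : ℝ) < ‖x‖ := norm_pos_iff.mpr hx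
      have hx1 : ((‖x‖⁻¹ : ℝ) : ℂ) • x ∈ Metric.sphere (0 : Fin n → ℂ) 1 := by
        rw [mem_sphere_zero_iff_norm, norm_smul]
        simp only [Complex.norm_real, norm_inv, norm_norm]
        field_simp
      have hres := hsphub _ hx1
      rwa [rfun_smul M C K x (qf_pos hM hx).ne' _ (by positivity)] at hres
    have hcontr : γ ≤ γ - s := csSup_le hSne (by rintro y ⟨x, hx, rfl⟩; exact hub x hx)
    linarith
  have hspec : ((γ : ℝ) : ℂ) ∈ spectrum ℂ (phaseA M C K) :=
    (mem_spectrum_iff_det hM hK _).mpr hdetγ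
  have hub2 : ∀ lam ∈ spectrum ℂ (phaseA M C K), lam.re ≤ γ := by
    intro lam hlam
    have hdet := (mem_spectrum_iff_det hM hK lam).mp hlam
    obtain ⟨x, hx, hxeq⟩ := Matrix.exists_mulVec_eq_zero_iff.mpr hdet
    have h0 : (0 : ℂ) = lam ^ 2 * (qf M x : ℂ) + lam * (qf C x : ℂ) + (qf K x : ℂ) := by
      rw [← dot_Kpen hM hC hK, hxeq, dotProduct_zero]
    have hq := quadC (qf M x) (qf C x) (qf K x) (qf_pos hM hx) lam
      (by linear_combination -h0)
    exact le_trans hq (hmem' x hx)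
  refine ⟨hspec, hub2, ?_⟩
  have hset_bdd : BddAbove {r : ℝ | ∃ lam ∈ spectrum ℂ (phaseA M C K), lam.re = r} := by
    refine ⟨γ, ?_⟩
    rintro r ⟨lam, hlam, rfl⟩
    exact hub2 lam hlam
  apply le_antisymm
  · exact le_csSup hset_bdd ⟨((γ : ℝ) : ℂ), hspec, by simp⟩
  · refine csSup_le ⟨γ, ((γ : ℝ) : ℂ), hspec, by simp⟩ ?_
    rintro r ⟨lam, hlam, rfl⟩
    exact hub2 lam hlam
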